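/- With F_n(w) = (1/(2√w))·sqrt(c_n(w)/a_n(w))·sqrt((a_n(w)·c_n(w) − b_n(w)²)/(w·a_n(w)²)), one has ∫_0^{1 − (log n)/n} F_n(w) dw ≤ (2 + √2)·n for all sufficiently large n. -/

import Mathlib

open Finset Real

noncomputable def aa (n : ℕ) (w : ℝ) : ℝ := ∑ j ∈ Finset.range (n+1), w ^ j
noncomputable def bb (n : ℕ) (w : ℝ) : ℝ := ∑ j ∈ Finset.range (n+1), (j : ℝ) * w ^ j
noncomputable def cc (n : ℕ) (w : ℝ) : ℝ := ∑ j ∈ Finset.range (n+1), (j : ℝ)^2 * w ^ j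

noncomputable def F (n : ℕ) (w : ℝ) : ℝ :=
  (1 / (2 * Real.sqrt w)) * Real.sqrt (cc n w / aa n w) *
    Real.sqrt ((aa n w * cc n w - (bb n w)^2) / (w * (aa n w)^2))

lemma one_le_aa (n : ℕ) {w : ℝ} (hw : 0 ≤ w) : 1 ≤ aa n w := by
  have : (1:ℝ) = w ^ 0 := by simp
  rw [this, aa]
  exact Finset.single_le_sum (f := fun j => w ^ j) (fun i _ => pow_nonneg hw i)
    (Finset.mem_range.2 (Nat.succ_pos n))

lemma cc_nonneg (n : ℕ) {w : ℝ} (hw : 0 ≤ w) : 0 ≤ cc n w :=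
  Finset.sum_nonneg fun j _ => by positivity

lemma S_identity (n : ℕ) (w : ℝ) :
    (1-w)^3 * ∑ j ∈ Finset.range (n+1), ((j:ℝ)+1)*((j:ℝ)+2)*w^j
      = 2 - w^(n+1) * (((n:ℝ)+2)*((n:ℝ)+3) - 2*((n:ℝ)+1)*((n:ℝ)+3)*w
        + ((n:ℝ)+1)*((n:ℝ)+2)*w^2) := by
  induction n with
  | zero => simp; ring
  | succ m ih =>
    rw [Finset.sum_range_succ, mul_add, ih]
    push_cast
    ring

lemma S_le (n : ℕ) {w : ℝ} (hw0 : 0 ≤ w) (hw1 : w < 1) :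
    ∑ j ∈ Finset.range (n+1), ((j:ℝ)+1)*((j:ℝ)+2)*w^j ≤ 2 / (1-w)^3 := by
  have h1w : (0:ℝ) < 1 - w := by linarith
  have h3 : (0:ℝ) < (1-w)^3 := pow_pos h1w 3
  rw [le_div_iff₀ h3, mul_comm]
  have hP : 0 ≤ ((n:ℝ)+2)*((n:ℝ)+3) - 2*((n:ℝ)+1)*((n:ℝ)+3)*w + ((n:ℝ)+1)*((n:ℝ)+2)*w^2 := by
    have hn : (0:ℝ) ≤ (n:ℝ) := Nat.cast_nonneg n
    nlinarith [sq_nonneg (1-w), sq_nonneg w, mul_nonneg hn (sq_nonneg (1-w))]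
  have hwp : 0 ≤ w^(n+1) := pow_nonneg hw0 _
  rw [S_identity]
  nlinarith [mul_nonneg hwp hP]

lemma cc_le (n : ℕ) {w : ℝ} (hw0 : 0 ≤ w) (hw1 : w < 1) : cc n w ≤ 2 / (1-w)^3 := by
  refine le_trans ?_ (S_le n hw0 hw1)
  apply Finset.sum_le_sum
  intro j _
  have : ((j:ℝ))^2 ≤ ((j:ℝ)+1)*((j:ℝ)+2) := by nlinarith [Nat.cast_nonneg (α := ℝ) j]
  have hwj : (0:ℝ) ≤ w^j := pow_nonneg hw0 _
  nlinarith

lemma cc_le_region1 (n : ℕ) {w : ℝ} (hw0 : 0 ≤ w) (hw1 : w ≤ 1/2) : cc n w ≤ 32 * w := by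
  have key : cc n w ≤ 2*w*∑ j ∈ Finset.range (n+1), ((j:ℝ)+1)*((j:ℝ)+2)*(1/2:ℝ)^j := by
    rw [Finset.mul_sum, cc]
    apply Finset.sum_le_sum
    intro j _
    match j with
    | 0 => simp; positivity
    | Nat.succ k =>
      have h1 : w^(k+1) ≤ w * (1/2:ℝ)^k := by
        calc w^(k+1) = w * w^k := by ring
        _ ≤ w * (1/2:ℝ)^k := by
            apply mul_le_mul_of_nonneg_left _ hw0
            exact pow_le_pow_left₀ hw0 hw1 k
      have hk : (0:ℝ) ≤ (k:ℝ) := Nat.cast_nonneg k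
      have hwk : (0:ℝ) ≤ (1/2:ℝ)^k := by positivity
      push_cast
      calc ((k:ℝ)+1)^2 * w^(k+1) ≤ ((k:ℝ)+1)^2 * (w * (1/2:ℝ)^k) := by
            apply mul_le_mul_of_nonneg_left h1 (by positivity)
      _ ≤ 2*w*(((k:ℝ)+1+1)*((k:ℝ)+1+2)*(1/2:ℝ)^(k+1)) := by
            have : (1/2:ℝ)^(k+1) = (1/2) * (1/2)^k := by ring
            rw [this]
            nlinarith [mul_nonneg hw0 hwk, mul_nonneg (mul_nonneg hw0 hwk) hk, mul_nonneg (mul_nonneg (mul_nonneg hw0 hwk) hk) hk]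
  have hS : ∑ j ∈ Finset.range (n+1), ((j:ℝ)+1)*((j:ℝ)+2)*(1/2:ℝ)^j ≤ 16 := by
    have := S_le n (w := 1/2) (by norm_num) (by norm_num)
    norm_num at this
    linarith
  calc cc n w ≤ 2*w*_ := key
  _ ≤ 2*w*16 := by apply mul_le_mul_of_nonneg_left hS (by positivity)
  _ = 32 * w := by ring
lemma F_nonneg (n : ℕ) (w : ℝ) : 0 ≤ F n w := by
  unfold F
  have h1 : 0 ≤ 1 / (2 * Real.sqrt w) := by positivity
  positivity

lemma F_le (n : ℕ) {w : ℝ} (hw : 0 < w) : F n w ≤ cc n w / (2 * w * aa n w) := by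
  have hA : (1:ℝ) ≤ aa n w := one_le_aa n hw.le
  have hA0 : (0:ℝ) < aa n w := by linarith
  have hC : (0:ℝ) ≤ cc n w := cc_nonneg n hw.le
  have hs : (0:ℝ) < Real.sqrt w := Real.sqrt_pos.2 hw
  have e1 : (aa n w * cc n w - (bb n w)^2) / (w * (aa n w)^2) ≤ cc n w / (w * aa n w) := by
    have hden : (0:ℝ) < w * (aa n w)^2 := by positivity
    have : (aa n w * cc n w - (bb n w)^2) / (w * (aa n w)^2)
        ≤ (aa n w * cc n w) / (w * (aa n w)^2) :=
      (div_le_div_iff_of_pos_right hden).2 (by nlinarith [sq_nonneg (bb n w)])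
    refine this.trans_eq ?_
    field_simp
  have e2 : Real.sqrt ((aa n w * cc n w - (bb n w)^2) / (w * (aa n w)^2))
      ≤ Real.sqrt (cc n w / (w * aa n w)) := Real.sqrt_le_sqrt e1
  have e3 : F n w ≤ (1 / (2 * Real.sqrt w)) * Real.sqrt (cc n w / aa n w)
      * Real.sqrt (cc n w / (w * aa n w)) := by
    unfold F
    apply mul_le_mul_of_nonneg_left e2
    positivity
  refine e3.trans ?_
  have e4 : Real.sqrt (cc n w / aa n w) * Real.sqrt (cc n w / (w * aa n w))
      = (cc n w / aa n w) / Real.sqrt w := by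
    rw [← Real.sqrt_mul (by positivity)]
    have : cc n w / aa n w * (cc n w / (w * aa n w)) = (cc n w / aa n w)^2 / w := by
      field_simp
    rw [this, Real.sqrt_div (by positivity), Real.sqrt_sq (by positivity)]
  rw [mul_assoc, e4]
  have hw' : Real.sqrt w * Real.sqrt w = w := Real.mul_self_sqrt hw.le
  have e5 : 1 / (2 * Real.sqrt w) * (cc n w / aa n w / Real.sqrt w)
      = cc n w / aa n w / (2 * (Real.sqrt w * Real.sqrt w)) := by ring
  rw [e5, hw']
  apply le_of_eq
  rw [div_div]
  ring_nf

lemma F_meas (n : ℕ) : Measurable (F n) := by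
  have ha : Continuous fun w : ℝ => aa n w := by
    unfold aa; exact continuous_finset_sum _ fun i _ => continuous_pow i
  have hb : Continuous fun w : ℝ => bb n w := by
    unfold bb; exact continuous_finset_sum _ fun i _ => (continuous_const.mul (continuous_pow i))
  have hc : Continuous fun w : ℝ => cc n w := by
    unfold cc; exact continuous_finset_sum _ fun i _ => (continuous_const.mul (continuous_pow i))
  unfold F
  exact (((measurable_const.div (measurable_const.mul Real.continuous_sqrt.measurable))).mul
      (Real.continuous_sqrt.measurable.comp (hc.measurable.div ha.measurable))).mul
      (Real.continuous_sqrt.measurable.comp (((ha.measurable.mul hc.measurable).sub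
        (hb.measurable.pow_const 2)).div
        (measurable_id.mul (ha.measurable.pow_const 2))))
lemma aa_lower (n : ℕ) {w : ℝ} (hw1 : w < 1) (hp : w^(n+1) ≤ 1/100) :
    (99/100) / (1-w) ≤ aa n w := by
  have h1w : (0:ℝ) < 1 - w := by linarith
  have hne : w ≠ 1 := ne_of_lt hw1
  have h2 : w - 1 ≠ 0 := sub_ne_zero.2 hne
  have h3 : (1:ℝ) - w ≠ 0 := ne_of_gt h1w
  have he : aa n w = (1 - w^(n+1)) / (1-w) := by
    unfold aa
    rw [geom_sum_eq hne]
    field_simp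
    ring
  rw [he]
  gcongr
  linarith

set_option maxHeartbeats 1000000 in
theorem stmt11 : ∃ N : ℕ, ∀ n : ℕ, N ≤ n →
    ∫ w in (0 : ℝ)..(1 - Real.log n / n), F n w ≤ (2 + Real.sqrt 2) * n := by
  use 100
  intro n hn
  have hn100 : (100:ℝ) ≤ (n:ℝ) := by exact_mod_cast hn
  have hn0 : (0:ℝ) < n := by linarith
  set L : ℝ := Real.log n / n with hLdef
  have hlog1 : 1 ≤ Real.log n := by
    rw [Real.le_log_iff_exp_le hn0]
    calc Real.exp 1 ≤ 2.7182818286 := Real.exp_one_lt_d9.le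
    _ ≤ (n:ℝ) := by linarith
  have hlogpos : (0:ℝ) < Real.log n := by linarith
  have hLpos : 0 < L := by positivity
  have hlogn : Real.log n ≤ (n:ℝ)/2 := by
    have hs : (0:ℝ) ≤ Real.sqrt n := Real.sqrt_nonneg _
    have hsq : Real.sqrt n ^ 2 = (n:ℝ) := Real.sq_sqrt hn0.le
    have h1 : Real.log n = 2 * Real.log (Real.sqrt n) := by
      rw [Real.log_sqrt hn0.le]; ring
    have h2 : Real.log (Real.sqrt n) ≤ Real.sqrt n - 1 :=
      Real.log_le_sub_one_of_pos (Real.sqrt_pos.2 hn0)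
    nlinarith [sq_nonneg (Real.sqrt n - 2)]
  have hL2 : L ≤ 1/2 := by
    rw [hLdef, div_le_iff₀ hn0]; linarith
  have hhalf : (1/2:ℝ) ≤ 1 - L := by linarith
  have hb1 : 1 - L < 1 := by linarith
  set t : ℝ := (n:ℝ) / Real.log n with htdef
  have htpos : 0 < t := by positivity
  have hLt : L⁻¹ = t := by rw [hLdef, htdef, inv_div]
  -- power bound
  have hpowb : (1 - L)^(n+1) ≤ 1/100 := by
    have h1 : (1 - L) ≤ Real.exp (-L) := by
      have := Real.add_one_le_exp (-L); linarith
    have h2 : (1-L)^(n+1) ≤ (1-L)^n :=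
      pow_le_pow_of_le_one (by linarith) (by linarith) (Nat.le_succ n)
    have h3 : (1-L)^n ≤ Real.exp (-L)^n := pow_le_pow_left₀ (by linarith) h1 n
    have h4 : Real.exp (-L)^n = Real.exp (-(Real.log n)) := by
      rw [← Real.exp_nat_mul]
      congr 1
      rw [hLdef]
      field_simp
    have h5 : Real.exp (-(Real.log n)) = 1/(n:ℝ) := by
      rw [Real.exp_neg, Real.exp_log hn0, one_div]
    have h6 : (1:ℝ)/n ≤ 1/100 := by
      apply div_le_div_of_nonneg_left (by norm_num) (by norm_num) hn100
    calc (1-L)^(n+1) ≤ (1-L)^n := h2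
    _ ≤ Real.exp (-L)^n := h3
    _ = 1/(n:ℝ) := by rw [h4, h5]
    _ ≤ 1/100 := h6
  -- region 1 pointwise bound
  have key1 : ∀ w ∈ Set.Icc (0:ℝ) (1/2), F n w ≤ 16 := by
    intro w hw
    rcases eq_or_lt_of_le hw.1 with h0 | h0
    · have : F n 0 = 0 := by simp [F]
      rw [← h0, this]; norm_num
    · have hF := F_le n h0
      have hA : (1:ℝ) ≤ aa n w := one_le_aa n h0.le
      have hcc := cc_le_region1 n h0.le hw.2
      refine hF.trans ?_
      rw [div_le_iff₀ (by positivity)]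
      nlinarith
  -- region 2 pointwise bound
  have key2 : ∀ w ∈ Set.Icc (1/2:ℝ) (1-L), F n w ≤ (21/10)*t*(1-w)⁻¹ := by
    intro w hw
    have hw0 : (0:ℝ) < w := lt_of_lt_of_le (by norm_num) hw.1
    have h1w : (0:ℝ) < 1 - w := by
      have := hw.2; linarith
    have hLw : L ≤ 1 - w := by have := hw.2; linarith
    have hp : w^(n+1) ≤ 1/100 := by
      calc w^(n+1) ≤ (1-L)^(n+1) := pow_le_pow_left₀ hw0.le hw.2 _
      _ ≤ 1/100 := hpowb
    have hA := aa_lower n (by linarith) hp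
    have hApos : (0:ℝ) < aa n w := lt_of_lt_of_le (by positivity) hA
    have hC := cc_le n hw0.le (by linarith)
    have hinv : (1-w)⁻¹ ≤ t := by
      rw [← hLt]
      exact inv_anti₀ hLpos hLw
    have hinv0 : (0:ℝ) ≤ (1-w)⁻¹ := by positivity
    refine (F_le n hw0).trans ?_
    have hd : 2*(1/2)*((99/100)/(1-w)) ≤ 2*w*aa n w := by
      have h9 : (99/100)/(1-w) ≤ aa n w := hA
      nlinarith [hw.1, hApos, mul_le_mul_of_nonneg_left h9 (by linarith : (0:ℝ) ≤ 2*w)]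
    calc cc n w / (2*w*aa n w) ≤ (2/(1-w)^3) / (2*w*aa n w) :=
          (div_le_div_iff_of_pos_right (by positivity)).2 hC
    _ ≤ (2/(1-w)^3) / (2*(1/2)*((99/100)/(1-w))) :=
          div_le_div_of_nonneg_left (by positivity) (by positivity) hd
    _ = (200/99) * ((1-w)⁻¹ * (1-w)⁻¹) := by
          field_simp
          ring
    _ ≤ (200/99) * (t * (1-w)⁻¹) :=
          mul_le_mul_of_nonneg_left (mul_le_mul_of_nonneg_right hinv hinv0) (by norm_num)
    _ ≤ (21/10)*t*(1-w)⁻¹ := by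
          rw [mul_assoc (21/10:ℝ)]
          exact mul_le_mul_of_nonneg_right (by norm_num) (by positivity)
  -- integrability
  have hI1 : IntervalIntegrable (F n) MeasureTheory.volume 0 (1/2) := by
    rw [intervalIntegrable_iff]
    apply MeasureTheory.Measure.integrableOn_of_bounded (M := 16)
      (by rw [Set.uIoc_of_le (by norm_num : (0:ℝ) ≤ 1/2)]; exact (measure_Ioc_lt_top).ne)
      ((F_meas n).aestronglyMeasurable)
    filter_upwards [MeasureTheory.ae_restrict_mem measurableSet_uIoc] with w hw
    rw [Set.uIoc_of_le (by norm_num : (0:ℝ) ≤ 1/2)] at hw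
    rw [Real.norm_eq_abs, abs_of_nonneg (F_nonneg n w)]
    exact key1 w ⟨hw.1.le, hw.2⟩
  have hI2 : IntervalIntegrable (F n) MeasureTheory.volume (1/2) (1-L) := by
    rw [intervalIntegrable_iff]
    apply MeasureTheory.Measure.integrableOn_of_bounded (M := (21/10)*t*L⁻¹)
      (by rw [Set.uIoc_of_le hhalf]; exact (measure_Ioc_lt_top).ne)
      ((F_meas n).aestronglyMeasurable)
    filter_upwards [MeasureTheory.ae_restrict_mem measurableSet_uIoc] with w hw
    rw [Set.uIoc_of_le hhalf] at hw
    rw [Real.norm_eq_abs, abs_of_nonneg (F_nonneg n w)]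
    have h1 := key2 w ⟨hw.1.le, hw.2⟩
    have h1w : (0:ℝ) < 1 - w := by have := hw.2; linarith
    have hLw : L ≤ 1 - w := by have := hw.2; linarith
    have : (1-w)⁻¹ ≤ L⁻¹ := inv_anti₀ hLpos hLw
    refine h1.trans ?_
    gcongr
  -- the constant majorant on region 2
  have hg : IntervalIntegrable (fun w => (21/10)*t*(1-w)⁻¹) MeasureTheory.volume (1/2) (1-L) := by
    apply ContinuousOn.intervalIntegrable
    apply ContinuousOn.mul continuousOn_const
    apply ContinuousOn.inv₀ ((continuous_const.sub continuous_id).continuousOn)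
    intro x hx
    rw [Set.uIcc_of_le hhalf] at hx
    have hgt : L ≤ 1 - x := by have := hx.2; linarith
    intro h
    simp only [Pi.sub_apply, id_eq] at h
    linarith
  -- split
  have hsplit : ∫ w in (0:ℝ)..(1-L), F n w
      = (∫ w in (0:ℝ)..(1/2), F n w) + ∫ w in (1/2:ℝ)..(1-L), F n w :=
    (intervalIntegral.integral_add_adjacent_intervals hI1 hI2).symm
  -- region 1 integral
  have hint1 : ∫ w in (0:ℝ)..(1/2), F n w ≤ 8 := by
    have h := intervalIntegral.integral_mono_on (by norm_num : (0:ℝ) ≤ 1/2) hI1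
      (intervalIntegrable_const (c := (16:ℝ))) key1
    rw [intervalIntegral.integral_const] at h
    simp at h
    linarith
  -- region 2 integral
  have hint2 : ∫ w in (1/2:ℝ)..(1-L), F n w ≤ (21/10)*(n:ℝ) := by
    have h := intervalIntegral.integral_mono_on hhalf hI2 hg key2
    refine h.trans ?_
    rw [intervalIntegral.integral_const_mul]
    have e1 : (∫ w in (1/2:ℝ)..(1-L), (1-w)⁻¹)
        = ∫ x in L..(1/2:ℝ), x⁻¹ := by
      have := intervalIntegral.integral_comp_sub_left (a := (1/2:ℝ)) (b := 1-L)
        (fun x : ℝ => x⁻¹) 1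
      convert this using 2 <;> ring
    rw [e1, integral_inv_of_pos hLpos (by norm_num)]
    have h2 : Real.log ((1/2)/L) ≤ Real.log n := by
      have hle : (1/2)/L ≤ (n:ℝ) := by
        rw [div_le_iff₀ hLpos]
        have : L * (n:ℝ) = Real.log n := by
          rw [hLdef]; field_simp
        nlinarith
      exact Real.log_le_log (by positivity) hle
    calc (21/10)*t * Real.log ((1/2)/L) ≤ (21/10)*t * Real.log n :=
          mul_le_mul_of_nonneg_left h2 (by positivity)
    _ = (21/10)*(n:ℝ) := by
          rw [htdef]
          field_simp
  -- finish
  rw [hsplit]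
  have hs2 : (1.4:ℝ) ≤ Real.sqrt 2 := by
    nlinarith [Real.sq_sqrt (by norm_num : (0:ℝ) ≤ 2), Real.sqrt_nonneg 2]
  have hmul : (1.4:ℝ)*(n:ℝ) ≤ Real.sqrt 2 * n := mul_le_mul_of_nonneg_right hs2 hn0.le
  linarith
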